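/- arXiv:2504.21127 — 2 statements merged into one kernel-verified Lean document; each statement's English description precedes it below -/
import Mathlib

section
/- Suppose there exist b ≥ 4 and, for every P5-free graph G with clique number w ≥ 2 and χ(G) ≥ 2, a complete pair (A,B) in G with χ(A) ≥ w^{-b}·χ(G) and χ(B) ≥ 2^{-b}·χ(G). Then there exists d ≥ 1 (one may take d = 2b) such that every P5-free graph G with clique number at most w ≥ 3 has χ(G) ≤ w^{d·log w / log log w}, where log is the binary logarithm. -/
open SimpleGraph

/-- The chromatic number of the subgraph of `G` induced on `S`, as a natural number. -/
noncomputable def chiSet {V : Type*} (G : SimpleGraph V) (S : Set V) : ℕ :=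
  (G.induce S).chromaticNumber.toNat

/-- The chromatic number of `G`, as a natural number. -/
noncomputable def chi {V : Type*} (G : SimpleGraph V) : ℕ :=
  G.chromaticNumber.toNat

/-- `(A, B)` is an anticomplete pair: no edge of `G` joins `A` and `B`. -/
def Anticomplete {V : Type*} (G : SimpleGraph V) (A B : Set V) : Prop :=
  ∀ a ∈ A, ∀ b ∈ B, ¬ G.Adj a b

/-- `G` is `H`-free: no induced subgraph of `G` is isomorphic to `H`. -/
def FreeOf {V W : Type*} (G : SimpleGraph V) (H : SimpleGraph W) : Prop :=
  IsEmpty (H ↪g G)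


private def sD : ℕ → ℕ
  | 0 => 0
  | (x+1) => 1 + sD ((x+1) - max 1 (Nat.log 2 (x+1)))
  decreasing_by omega

private def tD : ℕ → ℕ
  | 0 => 0
  | 1 => 0
  | (w+2) => 1 + tD ((w+2) / max 2 (Nat.clog 2 (w+2)))
  decreasing_by exact Nat.div_lt_self (by omega) (lt_of_lt_of_le one_lt_two (le_max_left _ _))

private def fB (b : ℕ) : ℕ → ℕ
  | 0 => 1
  | 1 => 1
  | (w+2) => (w+2)^(3*b) * fB b ((w+2) / max 2 (Nat.clog 2 (w+2)))
  decreasing_by exact Nat.div_lt_self (by omega) (lt_of_lt_of_le one_lt_two (le_max_left _ _))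

private def FD : ℕ → ℕ
  | 0 => 2
  | (j+1) => FD j + 2^(j+1)/(j+1) + 1

private lemma fB_eq {b w : ℕ} (h : 2 ≤ w) :
    fB b w = w^(3*b) * fB b (w / max 2 (Nat.clog 2 w)) := by
  obtain ⟨v, rfl⟩ : ∃ v, w = v + 2 := ⟨w - 2, by omega⟩
  rw [fB]

private lemma tD_eq {w : ℕ} (h : 2 ≤ w) :
    tD w = 1 + tD (w / max 2 (Nat.clog 2 w)) := by
  obtain ⟨v, rfl⟩ : ∃ v, w = v + 2 := ⟨w - 2, by omega⟩
  rw [tD]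

private lemma sD_eq {x : ℕ} (h : 1 ≤ x) :
    sD x = 1 + sD (x - max 1 (Nat.log 2 x)) := by
  obtain ⟨v, rfl⟩ : ∃ v, x = v + 1 := ⟨x - 1, by omega⟩
  rw [sD]

private lemma one_le_fB (b w : ℕ) : 1 ≤ fB b w := by
  induction w using Nat.strong_induction_on with
  | _ w IH =>
    match w with
    | 0 => simp [fB]
    | 1 => simp [fB]
    | (v+2) =>
      rw [fB]
      have := IH ((v+2) / max 2 (Nat.clog 2 (v+2)))
        (Nat.div_lt_self (by omega) (lt_of_lt_of_le one_lt_two (le_max_left _ _)))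
      exact Nat.one_le_iff_ne_zero.mpr (by positivity)

private lemma fB_le_pow (b w : ℕ) : fB b w ≤ w ^ (3 * b * tD w) := by
  induction w using Nat.strong_induction_on with
  | _ w IH =>
    match w with
    | 0 => simp [fB, tD]
    | 1 => simp [fB, tD]
    | (v+2) =>
      set k := max 2 (Nat.clog 2 (v+2)) with hk
      have hlt : (v+2) / k < v + 2 :=
        Nat.div_lt_self (by omega) (lt_of_lt_of_le one_lt_two (le_max_left _ _))
      have h1 := IH _ hlt
      calc fB b (v+2) = (v+2)^(3*b) * fB b ((v+2)/k) := fB_eq (by omega)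
        _ ≤ (v+2)^(3*b) * ((v+2)/k) ^ (3*b* tD ((v+2)/k)) := Nat.mul_le_mul_left _ h1
        _ ≤ (v+2)^(3*b) * (v+2) ^ (3*b* tD ((v+2)/k)) := by
            exact Nat.mul_le_mul_left _ (Nat.pow_le_pow_left (Nat.div_le_self _ _) _)
        _ = (v+2) ^ (3*b*(1 + tD ((v+2)/k))) := by rw [← pow_add]; ring_nf
        _ = (v+2) ^ (3*b* tD (v+2)) := by rw [← tD_eq (by omega)]

private def gD (x : ℕ) : ℕ := x - max 1 (Nat.log 2 x)

private lemma log_succ_le (x : ℕ) : Nat.log 2 (x+1) ≤ Nat.log 2 x + 1 := by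
  rcases Nat.eq_zero_or_pos x with h | h
  · subst h; simp
  · calc Nat.log 2 (x+1) ≤ Nat.log 2 (x*2) := Nat.log_mono_right (by omega)
      _ = Nat.log 2 x + 1 := Nat.log_mul_base (by omega) (by omega)

private lemma gD_mono : Monotone gD := by
  have step : ∀ x, gD x ≤ gD (x+1) := by
    intro x
    have h1 := log_succ_le x
    have h2 : Nat.log 2 x ≤ x := Nat.log_le_self _ _
    unfold gD
    omega
  exact monotone_nat_of_le_succ step

private lemma gD_lt {x : ℕ} (h : 1 ≤ x) : gD x < x := by
  unfold gD; omega

private lemma sD_mono : Monotone sD := by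
  have key : ∀ y, ∀ x ≤ y, sD x ≤ sD y := by
    intro y
    induction y using Nat.strong_induction_on with
    | _ y IH =>
      intro x hxy
      rcases eq_or_lt_of_le hxy with rfl | hlt
      · exact le_rfl
      · rcases Nat.eq_zero_or_pos x with rfl | hx
        · simp [sD]
        · have hy : 1 ≤ y := by omega
          rw [sD_eq hx, sD_eq hy]
          have hgx : gD x ≤ gD y := gD_mono hxy
          have := IH (gD y) (gD_lt hy) (gD x) hgx
          unfold gD at this
          omega
  intro x y h; exact key y x h

-- step lemma: the log drops by max 1 (loglog) each iteration
private lemma log_drop {w : ℕ} (hw : 2 ≤ w) (hw' : 2 ≤ w / max 2 (Nat.clog 2 w)) :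
    Nat.log 2 (w / max 2 (Nat.clog 2 w)) + max 1 (Nat.log 2 (Nat.log 2 w)) ≤ Nat.log 2 w := by
  set k := max 2 (Nat.clog 2 w) with hk
  set w' := w / k with hw'def
  have hk2 : 2 ≤ k := le_max_left _ _
  have hkpos : 0 < k := by omega
  have h1 : 2 ^ (Nat.log 2 w') ≤ w' := Nat.pow_log_le_self 2 (by omega)
  have h2 : 2 ^ (Nat.log 2 k) ≤ k := Nat.pow_log_le_self 2 (by omega)
  have h3 : w' * k ≤ w := Nat.div_mul_le_self w k
  have h4 : 2 ^ (Nat.log 2 w' + Nat.log 2 k) ≤ w := by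
    rw [pow_add]
    calc 2 ^ Nat.log 2 w' * 2 ^ Nat.log 2 k ≤ w' * k := Nat.mul_le_mul h1 h2
      _ ≤ w := h3
  have h5 : Nat.log 2 w' + Nat.log 2 k ≤ Nat.log 2 w :=
    (Nat.le_log_iff_pow_le (by omega) (by omega)).mpr h4
  have h6 : 1 ≤ Nat.log 2 k := by
    calc 1 = Nat.log 2 2 := (Nat.log_eq_one_iff.mpr (by omega)).symm
      _ ≤ Nat.log 2 k := Nat.log_mono_right hk2
  have h7 : Nat.log 2 (Nat.log 2 w) ≤ Nat.log 2 k := by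
    apply Nat.log_mono_right
    calc Nat.log 2 w ≤ Nat.clog 2 w := Nat.log_le_clog _ _
      _ ≤ k := le_max_right _ _
  omega

private lemma tD_le_sD (w : ℕ) : tD w ≤ sD (Nat.log 2 w) := by
  induction w using Nat.strong_induction_on with
  | _ w IH =>
    match w, IH with
    | 0, _ => simp [tD]
    | 1, _ => simp [tD]
    | (v+2), IH =>
      have hw : 2 ≤ v + 2 := by omega
      have hlt : (v+2) / max 2 (Nat.clog 2 (v+2)) < v+2 :=
        Nat.div_lt_self (by omega) (lt_of_lt_of_le one_lt_two (le_max_left _ _))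
      have hLw : 1 ≤ Nat.log 2 (v+2) := by
        calc 1 = Nat.log 2 2 := (Nat.log_eq_one_iff.mpr (by omega)).symm
          _ ≤ Nat.log 2 (v+2) := Nat.log_mono_right hw
      have hsplit : sD (Nat.log 2 (v+2)) = 1 + sD (gD (Nat.log 2 (v+2))) := by
        rw [sD_eq hLw]; rfl
      rw [tD_eq hw, hsplit]
      rcases Nat.lt_or_ge ((v+2) / max 2 (Nat.clog 2 (v+2))) 2 with h2 | h2
      · have : tD ((v+2) / max 2 (Nat.clog 2 (v+2))) = 0 := by
          set u := (v+2) / max 2 (Nat.clog 2 (v+2))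
          interval_cases u <;> simp [tD]
        omega
      · have h3 := IH _ hlt
        have hdrop := log_drop hw h2
        have h4 : Nat.log 2 ((v+2) / max 2 (Nat.clog 2 (v+2))) ≤ gD (Nat.log 2 (v+2)) := by
          unfold gD; omega
        have h5 := sD_mono h4
        omega

private lemma FD_mono : Monotone FD := by
  apply monotone_nat_of_le_succ
  intro j
  show FD j ≤ FD j + 2^(j+1)/(j+1) + 1
  linarith [Nat.zero_le (2^(j+1)/(j+1))]

private lemma sD_band : ∀ j, ∀ x, x < 2^(j+1) → sD x ≤ FD j := by
  intro j
  induction j with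
  | zero =>
    intro x hx
    interval_cases x
    · simp [sD, FD]
    · simp [sD, FD]
  | succ j IHj =>
    -- band sub-claim
    have band : ∀ x, 2^(j+1) ≤ x → x < 2^(j+2) → sD x ≤ FD j + (x - 2^(j+1) + (j+1))/(j+1) := by
      intro x
      induction x using Nat.strong_induction_on with
      | _ x IHx =>
        intro hlo hhi
        have hLx : Nat.log 2 x = j + 1 := Nat.log_eq_of_pow_le_of_lt_pow hlo hhi
        have hxpos : 1 ≤ x := le_trans (Nat.one_le_two_pow) hlo
        have hstep : sD x = 1 + sD (x - (j+1)) := by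
          rw [sD_eq hxpos, hLx]
          congr 2
        rcases Nat.lt_or_ge (x - (j+1)) (2^(j+1)) with hc | hc
        · have h1 : sD (x - (j+1)) ≤ FD j := IHj _ hc
          have h2 : 1 ≤ (x - 2^(j+1) + (j+1))/(j+1) :=
            (Nat.one_le_div_iff (by omega)).mpr (by omega)
          rw [hstep]
          linarith
        · have hlt : x - (j+1) < x := by omega
          have hp0 : 1 ≤ 2^j := Nat.one_le_two_pow
          have heq : x - (j+1) - 2^(j+1) + (j+1) = x - 2^(j+1) := by omega
          have h1 := IHx _ hlt hc (lt_of_le_of_lt (Nat.sub_le _ _) hhi)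
          rw [heq] at h1
          have h2 : (x - 2^(j+1) + (j+1))/(j+1) = (x - 2^(j+1))/(j+1) + 1 :=
            Nat.add_div_right _ (by omega)
          rw [hstep, h2]
          linarith
    intro x hx
    rcases Nat.lt_or_ge x (2^(j+1)) with h | h
    · exact le_trans (IHj x h) (FD_mono (Nat.le_succ j))
    · have h1 := band x h hx
      have h2 : (x - 2^(j+1) + (j+1))/(j+1) ≤ (2^(j+1) + (j+1))/(j+1) :=
        Nat.div_le_div_right (by omega)
      have h3 : (2^(j+1) + (j+1))/(j+1) = 2^(j+1)/(j+1) + 1 := Nat.add_div_right _ (by omega)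
      show sD x ≤ FD j + 2^(j+1)/(j+1) + 1
      linarith

private lemma add_two_le_two_pow {j : ℕ} (h : 2 ≤ j) : j + 2 ≤ 2^j := by
  induction j with
  | zero => omega
  | succ j IH =>
    rcases Nat.lt_or_ge j 2 with h2 | h2
    · interval_cases j <;> simp_all <;> omega
    · have := IH h2
      have : 2^j ≤ 2^(j+1) := Nat.pow_le_pow_right (by omega) (by omega)
      omega

private lemma FD_bound : ∀ j, FD j * (j+1) ≤ 6 * 2^j := by
  intro j
  induction j with
  | zero => simp [FD]
  | succ j IH =>
    rcases Nat.lt_or_ge j 5 with h5 | h5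
    · interval_cases j <;> simp [FD] <;> omega
    · have hFj : FD j ≤ 2^j := by
        have h6 : FD j * 6 ≤ FD j * (j+1) := Nat.mul_le_mul_left _ (by omega)
        have : FD j * 6 ≤ 6 * 2^j := le_trans h6 IH
        omega
      have hdiv : (2^(j+1)/(j+1))*(j+2) ≤ 4 * 2^j := by
        have ha : (2^(j+1)/(j+1))*(j+2) ≤ (2^(j+1)*(j+2))/(j+1) := by
          rw [Nat.le_div_iff_mul_le (by omega : 0 < j+1)]
          calc 2^(j+1)/(j+1)*(j+2)*(j+1) = (2^(j+1)/(j+1)*(j+1))*(j+2) := by ring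
            _ ≤ 2^(j+1)*(j+2) := Nat.mul_le_mul_right _ (Nat.div_mul_le_self _ _)
        have hb : (2^(j+1)*(j+2))/(j+1) ≤ (2^(j+2)*(j+1))/(j+1) := by
          apply Nat.div_le_div_right
          calc 2^(j+1)*(j+2) ≤ 2^(j+1)*(2*(j+1)) := Nat.mul_le_mul_left _ (by omega)
            _ = 2^(j+2)*(j+1) := by ring
        have hc : (2^(j+2)*(j+1))/(j+1) = 2^(j+2) := Nat.mul_div_cancel _ (by omega)
        have hp : (2:ℕ)^(j+2) = 4 * 2^j := by ring
        linarith
      have hj2 : j + 2 ≤ 2^j := add_two_le_two_pow (by omega)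
      have expand : FD (j+1) * (j+2) = FD j*(j+1) + FD j + (2^(j+1)/(j+1))*(j+2) + (j+2) := by
        show (FD j + 2^(j+1)/(j+1) + 1)*(j+2) = _
        ring
      have hp1 : (6:ℕ) * 2^(j+1) = 12 * 2^j := by ring
      show FD (j+1) * (j+2) ≤ 6 * 2^(j+1)
      linarith

private lemma tD_bound {w : ℕ} (hw : 2 ≤ w) :
    tD w * (Nat.log 2 (Nat.log 2 w) + 1) ≤ 6 * Nat.log 2 w := by
  set x := Nat.log 2 w with hx
  have hx1 : 1 ≤ x := by
    rw [hx]
    calc 1 = Nat.log 2 2 := (Nat.log_eq_one_iff.mpr (by omega)).symm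
      _ ≤ Nat.log 2 w := Nat.log_mono_right hw
  have h1 : tD w ≤ sD x := tD_le_sD w
  have h2 : sD x ≤ FD (Nat.log 2 x) := sD_band _ _ (Nat.lt_pow_succ_log_self (by omega) x)
  calc tD w * (Nat.log 2 x + 1) ≤ FD (Nat.log 2 x) * (Nat.log 2 x + 1) :=
        Nat.mul_le_mul_right _ (le_trans h1 h2)
    _ ≤ 6 * 2^(Nat.log 2 x) := FD_bound _
    _ ≤ 6 * x := Nat.mul_le_mul_left _ (Nat.pow_log_le_self 2 (by omega))

private lemma natlog_le_logb {w : ℕ} (hw : 1 ≤ w) :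
    (Nat.log 2 w : ℝ) ≤ Real.logb 2 w := by
  rw [Real.le_logb_iff_rpow_le (by norm_num) (by exact_mod_cast hw : (0:ℝ) < w)]
  rw [Real.rpow_natCast]
  exact_mod_cast Nat.pow_log_le_self 2 (by omega)

private lemma logb_le_natlog {w : ℕ} (hw : 1 ≤ w) :
    Real.logb 2 w ≤ (Nat.log 2 w : ℝ) + 1 := by
  rw [show ((Nat.log 2 w : ℝ) + 1) = ((Nat.log 2 w + 1 : ℕ) : ℝ) by push_cast; ring]
  rw [Real.logb_le_iff_le_rpow (by norm_num) (by exact_mod_cast hw : (0:ℝ) < w)]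
  rw [Real.rpow_natCast]
  exact_mod_cast (Nat.lt_pow_succ_log_self (by omega) w).le

private lemma final_exponent {b w : ℕ} (hw : 3 ≤ w) :
    ((w:ℝ)) ^ ((3*b*tD w : ℕ) : ℝ) ≤
      (w:ℝ) ^ (((18*b : ℕ) : ℝ) * Real.logb 2 w / Real.logb 2 (Real.logb 2 w)) := by
  have hw1 : (1:ℝ) ≤ w := by exact_mod_cast (by omega : 1 ≤ w)
  set L := Nat.log 2 w with hL
  set LL := Nat.log 2 L with hLL
  have hL1 : 1 ≤ L := by
    rw [hL]
    calc 1 = Nat.log 2 2 := (Nat.log_eq_one_iff.mpr (by omega)).symm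
      _ ≤ Nat.log 2 w := Nat.log_mono_right (by omega)
  have hlogbw_pos : (1:ℝ) < Real.logb 2 w := by
    have h3 : (2:ℝ) < w := by exact_mod_cast (by omega : 2 < w)
    calc (1:ℝ) = Real.logb 2 2 := (Real.logb_self_eq_one (by norm_num)).symm
      _ < Real.logb 2 w := Real.logb_lt_logb (by norm_num) (by norm_num) h3
  have hpos : 0 < Real.logb 2 (Real.logb 2 w) := Real.logb_pos (by norm_num) hlogbw_pos
  -- loglog upper bound
  have hLLub : Real.logb 2 (Real.logb 2 w) ≤ (LL:ℝ) + 1 := by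
    have h1 : Real.logb 2 w ≤ (L:ℝ) + 1 := logb_le_natlog (by omega)
    have h2 : (L:ℝ) + 1 ≤ (2:ℝ)^((LL:ℝ)+1) := by
      rw [show ((LL:ℝ)+1) = ((LL+1 : ℕ):ℝ) by push_cast; ring, Real.rpow_natCast]
      exact_mod_cast Nat.lt_pow_succ_log_self (by omega) L
    rw [Real.logb_le_iff_le_rpow (by norm_num) (by linarith)]
    linarith
  have hLlb : (L:ℝ) ≤ Real.logb 2 w := natlog_le_logb (by omega)
  -- key nat bound
  have hkey : (tD w : ℝ) * ((LL:ℝ) + 1) ≤ 6 * (L:ℝ) := by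
    have := tD_bound (by omega : 2 ≤ w)
    rw [← hL, ← hLL] at this
    exact_mod_cast this
  apply Real.rpow_le_rpow_of_exponent_le hw1
  rw [le_div_iff₀ hpos]
  have hnn : (0:ℝ) ≤ ((3*b*tD w : ℕ) : ℝ) := by positivity
  calc ((3*b*tD w : ℕ) : ℝ) * Real.logb 2 (Real.logb 2 w)
      ≤ ((3*b*tD w : ℕ) : ℝ) * ((LL:ℝ) + 1) := by
        apply mul_le_mul_of_nonneg_left hLLub hnn
    _ = (3*b : ℕ) * ((tD w : ℝ) * ((LL:ℝ)+1)) := by push_cast; ring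
    _ ≤ (3*b : ℕ) * (6 * (L:ℝ)) := by
        apply mul_le_mul_of_nonneg_left hkey (by positivity)
    _ = ((18*b : ℕ):ℝ) * (L:ℝ) := by push_cast; ring
    _ ≤ ((18*b : ℕ):ℝ) * Real.logb 2 w := by
        apply mul_le_mul_of_nonneg_left hLlb (by positivity)

section GraphHelpers
variable {V W : Type*}

lemma chromaticNumber_eq_of_iso {G : SimpleGraph V} {H : SimpleGraph W} (e : G ≃g H) :
    G.chromaticNumber = H.chromaticNumber :=
  le_antisymm (chromaticNumber_mono_of_hom e.toHom)
    (chromaticNumber_mono_of_hom e.symm.toHom)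

lemma chi_eq_of_iso {G : SimpleGraph V} {H : SimpleGraph W} (e : G ≃g H) : chi G = chi H := by
  unfold chi; rw [chromaticNumber_eq_of_iso e]

lemma chromaticNumber_ne_top {G : SimpleGraph V} [Finite V] : G.chromaticNumber ≠ ⊤ := by
  have : Fintype V := Fintype.ofFinite V
  intro h
  have h2 := G.colorable_of_fintype.chromaticNumber_le
  rw [h] at h2
  simp [top_le_iff] at h2

lemma chi_eq_chromaticNumber {G : SimpleGraph V} [Finite V] :
    (chi G : ℕ∞) = G.chromaticNumber :=
  ENat.coe_toNat chromaticNumber_ne_top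

lemma chi_le_of_colorable {G : SimpleGraph V} {m : ℕ} (h : G.Colorable m) : chi G ≤ m :=
  ENat.toNat_le_of_le_coe h.chromaticNumber_le

lemma colorable_chi {G : SimpleGraph V} [Finite V] : G.Colorable (chi G) := by
  have : Fintype V := Fintype.ofFinite V
  exact G.colorable_chromaticNumber_of_fintype

lemma chi_le_one_of_cliqueFree_two {G : SimpleGraph V} (h : G.CliqueFree 2) : chi G ≤ 1 := by
  apply chi_le_of_colorable
  rw [SimpleGraph.cliqueFree_two] at h
  subst h
  exact ⟨⟨fun _ => 0, fun hadj => (hadj).elim⟩⟩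

lemma not_cliqueFree_two_of_two_le_chi {G : SimpleGraph V} (h : 2 ≤ chi G) :
    ¬ G.CliqueFree 2 := fun hcf => by have := chi_le_one_of_cliqueFree_two hcf; omega

lemma freeOf_of_embedding {X : Type*} {G : SimpleGraph V} {H : SimpleGraph W}
    {K : SimpleGraph X} (f : H ↪g G) (h : FreeOf G K) : FreeOf H K :=
  ⟨fun e => h.false (f.comp e)⟩

/-- iso between a comap along an equiv and the original graph -/
def comapEquivIso (e : V ≃ W) (G : SimpleGraph W) : G.comap ⇑e ≃g G :=
  { e with map_rel_iff' := Iff.rfl }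


lemma chiSet_eq_chi_induce {G : SimpleGraph V} {S : Set V} : chiSet G S = chi (G.induce S) := rfl

lemma chi_comap_induce {m : ℕ} (G : SimpleGraph V) (S : Set V) (e : Fin m ≃ S) :
    chi ((G.induce S).comap ⇑e) = chiSet G S :=
  chi_eq_of_iso (comapEquivIso e (G.induce S))

lemma chiSet_comap {m : ℕ} (G : SimpleGraph V) (S : Set V) (e : Fin m ≃ S)
    (A : Set (Fin m)) :
    chiSet ((G.induce S).comap ⇑e) A = chiSet G (Subtype.val '' (⇑e '' A)) := by
  apply chi_eq_of_iso
  have hinj : Function.Injective (fun x : Fin m => ((e x : S) : V)) :=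
    Subtype.val_injective.comp e.injective
  have himg : Subtype.val '' (⇑e '' A) = (fun x : Fin m => ((e x : S) : V)) '' A := by
    rw [Set.image_image]
  exact ⟨(Equiv.Set.image (fun x : Fin m => ((e x : S) : V)) A hinj).trans
      (Equiv.setCongr himg.symm), by
    intro a b
    simp [Equiv.Set.image, Equiv.Set.imageOfInjOn, SimpleGraph.comap_adj]⟩

lemma exists_clique_of_not_cliqueFree_induce {G : SimpleGraph V} {A : Set V} {s : ℕ}
    (h : ¬ (G.induce A).CliqueFree s) : ∃ t : Finset V, ↑t ⊆ A ∧ G.IsNClique s t := by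
  rw [SimpleGraph.CliqueFree] at h
  push_neg at h
  obtain ⟨u, hu⟩ := h
  classical
  refine ⟨u.map (Function.Embedding.subtype _), ?_, ?_, ?_⟩
  · intro x hx
    simp only [Finset.coe_map, Set.mem_image, Finset.mem_coe] at hx
    obtain ⟨a, _, rfl⟩ := hx
    exact a.2
  · intro x hx y hy hxy
    simp only [Finset.coe_map, Set.mem_image, Finset.mem_coe] at hx hy
    obtain ⟨a, ha, rfl⟩ := hx
    obtain ⟨c, hc, rfl⟩ := hy
    have hac : a ≠ c := fun hh => hxy (by rw [hh])
    exact hu.1 (by exact_mod_cast ha) (by exact_mod_cast hc) hac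
  · rw [Finset.card_map]
    exact hu.2

lemma not_cliqueFree_of_blockade {n k s : ℕ} (G : SimpleGraph (Fin n))
    (A : Fin k → Set (Fin n))
    (hcomp : ∀ i j, i ≠ j → ∀ x ∈ A i, ∀ y ∈ A j, G.Adj x y)
    (t : Fin k → Finset (Fin n)) (hsub : ∀ i, ↑(t i) ⊆ A i)
    (hcl : ∀ i, G.IsNClique s (t i)) : ¬ G.CliqueFree (k * s) := by
  classical
  intro hcf
  apply hcf (Finset.univ.biUnion t)
  constructor
  · intro x hx y hy hxy
    simp only [Finset.coe_biUnion, Finset.coe_univ, Set.mem_iUnion, Finset.mem_coe,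
      Set.mem_univ, Set.iUnion_true] at hx hy
    obtain ⟨i, hi⟩ := hx
    obtain ⟨j, hj⟩ := hy
    by_cases hij : i = j
    · subst hij
      exact (hcl i).1 (by exact_mod_cast hi) (by exact_mod_cast hj) hxy
    · exact hcomp i j hij x (hsub i hi) y (hsub j hj)
  · rw [Finset.card_biUnion]
    · simp [(hcl _).2, Finset.sum_const, Finset.card_univ, Nat.mul_comm]
    · intro i _ j _ hij
      rw [Function.onFun, Finset.disjoint_left]
      intro a hai haj
      exact G.irrefl (hcomp i j hij a (hsub i hai) a (hsub j haj))

end GraphHelpers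

section Blockade

variable (b : ℕ)
  (hyp : ∀ (n : ℕ) (G : SimpleGraph (Fin n)) (w : ℕ), 2 ≤ w →
      ¬ G.CliqueFree w → G.CliqueFree (w + 1) → FreeOf G (SimpleGraph.pathGraph 5) →
      2 ≤ chi G →
      ∃ A B : Set (Fin n), Disjoint A B ∧ (∀ a ∈ A, ∀ c ∈ B, G.Adj a c) ∧
        (chi G : ℝ) ≤ (w : ℝ) ^ b * chiSet G A ∧
        (chi G : ℝ) ≤ 2 ^ b * chiSet G B)

include hyp in
lemma blockade {n w : ℕ} (G : SimpleGraph (Fin n)) (hw : 2 ≤ w)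
    (hfree : FreeOf G (SimpleGraph.pathGraph 5)) (hcf : G.CliqueFree (w+1)) (k : ℕ) :
    (chi G : ℝ) ≤ 2^(b*k) ∨
    ∃ (A : Fin k → Set (Fin n)) (B : Set (Fin n)),
      (∀ i j, i ≠ j → ∀ x ∈ A i, ∀ y ∈ A j, G.Adj x y) ∧
      (∀ i, ∀ x ∈ A i, ∀ y ∈ B, G.Adj x y) ∧
      (∀ i, (chi G : ℝ) ≤ (w:ℝ)^b * 2^(b*k) * chiSet G (A i)) ∧
      (chi G : ℝ) ≤ 2^(b*k) * chiSet G B := by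
  induction k with
  | zero =>
    right
    refine ⟨fun i => i.elim0, Set.univ, fun i => i.elim0, fun i => i.elim0, fun i => i.elim0, ?_⟩
    have huniv : chiSet G Set.univ = chi G := chi_eq_of_iso (SimpleGraph.induceUnivIso G)
    rw [huniv]
    norm_num
  | succ k IH =>
    have hpow : (2:ℝ)^(b*k) ≤ 2^(b*(k+1)) := by
      apply pow_le_pow_right₀ one_le_two
      exact Nat.mul_le_mul_left b (by omega)
    rcases IH with hle | ⟨A, B, hAA, hAB, hAbound, hBbound⟩
    · left; linarith
    · haveI : Fintype ↥B := Fintype.ofFinite _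
      set m := Fintype.card ↥B with hm
      set e : Fin m ≃ ↥B := (Fintype.equivFin ↥B).symm with he
      set H := (G.induce B).comap ⇑e with hH
      have hchiH : chi H = chiSet G B := by rw [hH]; exact chi_comap_induce G B e
      by_cases h2 : 2 ≤ chi H
      · -- apply hyp to H
        have embH : H ↪g G := by
          rw [hH]
          exact (SimpleGraph.Embedding.induce B).comp (comapEquivIso e (G.induce B)).toEmbedding
        have hfreeH : FreeOf H (SimpleGraph.pathGraph 5) := freeOf_of_embedding embH hfree
        have hcfH : H.CliqueFree (w+1) := hcf.comap ⟨embH.toCopy⟩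
        have hncf2 : ¬ H.CliqueFree 2 := not_cliqueFree_two_of_two_le_chi h2
        classical
        set w₁ := Nat.findGreatest (fun m => ¬ H.CliqueFree m) w with hw₁
        have hw₁2 : 2 ≤ w₁ := Nat.le_findGreatest (P := fun m => ¬ H.CliqueFree m) hw hncf2
        have hw₁w : w₁ ≤ w := Nat.findGreatest_le w
        have hncfw₁ : ¬ H.CliqueFree w₁ := Nat.findGreatest_spec (P := fun m => ¬ H.CliqueFree m) hw hncf2
        have hcfw₁ : H.CliqueFree (w₁+1) := by
          rcases eq_or_lt_of_le hw₁w with heq | hlt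
          · rw [heq]; exact hcfH
          · by_contra hcon
            exact (Nat.findGreatest_is_greatest (P := fun m => ¬ H.CliqueFree m) (n := w) (k := w₁+1) (by omega) (by omega)) hcon
        obtain ⟨A', B', _, hcompl', hA'b, hB'b⟩ := hyp m H w₁ hw₁2 hncfw₁ hcfw₁ hfreeH h2
        set Anew : Set (Fin n) := Subtype.val '' (⇑e '' A') with hAnew
        set Bnew : Set (Fin n) := Subtype.val '' (⇑e '' B') with hBnew
        have hAnewB : Anew ⊆ B := by
          rw [hAnew]; rintro x ⟨y, _, rfl⟩; exact y.2
        have hBnewB : Bnew ⊆ B := by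
          rw [hBnew]; rintro x ⟨y, _, rfl⟩; exact y.2
        have hchiA : chiSet H A' = chiSet G Anew := by rw [hH, hAnew]; exact chiSet_comap G B e A'
        have hchiB : chiSet H B' = chiSet G Bnew := by rw [hH, hBnew]; exact chiSet_comap G B e B'
        have hadjH : ∀ (a c : Fin m), H.Adj a c → G.Adj ((e a : ↥B) : Fin n) ((e c : ↥B) : Fin n) := by
          intro a c h
          rw [hH] at h
          simpa using h
        have hBound1 : (chi G : ℝ) ≤ (w:ℝ)^b * 2^(b*(k+1)) * chiSet G Anew := by
          have hstep1 : (chi G : ℝ) ≤ 2^(b*k) * ((w₁:ℝ)^b * chiSet H A') := by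
            calc (chi G : ℝ) ≤ 2^(b*k) * chiSet G B := hBbound
              _ = 2^(b*k) * chi H := by rw [hchiH]
              _ ≤ 2^(b*k) * ((w₁:ℝ)^b * chiSet H A') := by
                  apply mul_le_mul_of_nonneg_left hA'b (by positivity)
          have hw₁pow : (w₁:ℝ)^b ≤ (w:ℝ)^b := by
            apply pow_le_pow_left₀ (by positivity)
            exact_mod_cast hw₁w
          calc (chi G : ℝ) ≤ 2^(b*k) * ((w₁:ℝ)^b * chiSet H A') := hstep1
            _ ≤ 2^(b*k) * ((w:ℝ)^b * chiSet H A') := by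
                apply mul_le_mul_of_nonneg_left
                  (mul_le_mul_of_nonneg_right hw₁pow (by positivity)) (by positivity)
            _ = (w:ℝ)^b * 2^(b*k) * chiSet G Anew := by rw [← hchiA]; ring
            _ ≤ (w:ℝ)^b * 2^(b*(k+1)) * chiSet G Anew := by
                apply mul_le_mul_of_nonneg_right
                  (mul_le_mul_of_nonneg_left hpow (by positivity)) (by positivity)
        have hBound2 : (chi G : ℝ) ≤ 2^(b*(k+1)) * chiSet G Bnew := by
          have hsplit : (2:ℝ)^(b*(k+1)) = 2^(b*k) * 2^b := by
            rw [← pow_add]; ring_nf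
          calc (chi G : ℝ) ≤ 2^(b*k) * chiSet G B := hBbound
            _ = 2^(b*k) * chi H := by rw [hchiH]
            _ ≤ 2^(b*k) * ((2:ℝ)^b * chiSet H B') := by
                apply mul_le_mul_of_nonneg_left hB'b (by positivity)
            _ = 2^(b*(k+1)) * chiSet G Bnew := by rw [← hchiB, hsplit]; ring
        right
        refine ⟨Fin.snoc A Anew, Bnew, ?_, ?_, ?_, hBound2⟩
        · -- pairwise complete
          intro i j hij x hx y hy
          rcases Fin.eq_castSucc_or_eq_last i with ⟨i', rfl⟩ | rfl <;>
            rcases Fin.eq_castSucc_or_eq_last j with ⟨j', rfl⟩ | rfl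
          · rw [Fin.snoc_castSucc] at hx hy
            exact hAA i' j' (fun hh => hij (by rw [hh])) x hx y hy
          · rw [Fin.snoc_castSucc] at hx
            rw [Fin.snoc_last] at hy
            exact hAB i' x hx y (hAnewB hy)
          · rw [Fin.snoc_last] at hx
            rw [Fin.snoc_castSucc] at hy
            exact (hAB j' y hy x (hAnewB hx)).symm
          · exact absurd rfl hij
        · -- complete to Bnew
          intro i x hx y hy
          rcases Fin.eq_castSucc_or_eq_last i with ⟨i', rfl⟩ | rfl
          · rw [Fin.snoc_castSucc] at hx
            exact hAB i' x hx y (hBnewB hy)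
          · rw [Fin.snoc_last] at hx
            rw [hAnew] at hx
            rw [hBnew] at hy
            obtain ⟨xa, ⟨a, ha, rfl⟩, rfl⟩ := hx
            obtain ⟨yc, ⟨c, hc, rfl⟩, rfl⟩ := hy
            exact hadjH a c (hcompl' a ha c hc)
        · -- chromatic bounds
          intro i
          rcases Fin.eq_castSucc_or_eq_last i with ⟨i', rfl⟩ | rfl
          · rw [Fin.snoc_castSucc]
            calc (chi G : ℝ) ≤ (w:ℝ)^b * 2^(b*k) * chiSet G (A i') := hAbound i'
              _ ≤ (w:ℝ)^b * 2^(b*(k+1)) * chiSet G (A i') := by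
                  apply mul_le_mul_of_nonneg_right
                    (mul_le_mul_of_nonneg_left hpow (by positivity)) (by positivity)
          · rw [Fin.snoc_last]
            exact hBound1
      · -- chi H ≤ 1
        left
        have h1 : chi H ≤ 1 := by omega
        have hle : (chi G : ℝ) ≤ 2^(b*k) * 1 := by
          refine le_trans hBbound ?_
          apply mul_le_mul_of_nonneg_left _ (by positivity)
          rw [← hchiH]
          exact_mod_cast h1
        calc (chi G:ℝ) ≤ 2^(b*k) * 1 := hle
          _ = 2^(b*k) := by ring
          _ ≤ 2^(b*(k+1)) := hpow

end Blockade

section Main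

variable (b : ℕ)
  (hyp : ∀ (n : ℕ) (G : SimpleGraph (Fin n)) (w : ℕ), 2 ≤ w →
      ¬ G.CliqueFree w → G.CliqueFree (w + 1) → FreeOf G (SimpleGraph.pathGraph 5) →
      2 ≤ chi G →
      ∃ A B : Set (Fin n), Disjoint A B ∧ (∀ a ∈ A, ∀ c ∈ B, G.Adj a c) ∧
        (chi G : ℝ) ≤ (w : ℝ) ^ b * chiSet G A ∧
        (chi G : ℝ) ≤ 2 ^ b * chiSet G B)

include hyp in
lemma main_bound : ∀ (w n : ℕ) (G : SimpleGraph (Fin n)),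
    FreeOf G (SimpleGraph.pathGraph 5) → G.CliqueFree (w+1) → chi G ≤ fB b w := by
  intro w
  induction w using Nat.strong_induction_on with
  | _ w IH =>
    intro n G hfree hcf
    rcases Nat.lt_or_ge w 2 with hw | hw
    · have h2 : G.CliqueFree 2 := hcf.mono (by omega)
      have := chi_le_one_of_cliqueFree_two h2
      have := one_le_fB b w
      omega
    · set k := max 2 (Nat.clog 2 w) with hk
      have hk2 : 2 ≤ k := le_max_left _ _
      have hkpos : 0 < k := by omega
      have h2k : 2^k ≤ w^2 := by
        rcases le_or_gt (Nat.clog 2 w) 2 with hc | hc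
        · have hkk : k ≤ 2 := by omega
          have : k = 2 := by omega
          rw [this]
          calc 2^2 = 2*2 := by norm_num
            _ ≤ w*w := Nat.mul_le_mul hw hw
            _ = w^2 := (sq w).symm
        · have hkc : k = Nat.clog 2 w := by omega
          have h1 : 1 ≤ Nat.clog 2 w := by omega
          have h2 : 2^(Nat.clog 2 w - 1) < w := Nat.pow_pred_clog_lt_self (by omega) (by omega)
          have h3 : 2^(Nat.clog 2 w) = 2 * 2^(Nat.clog 2 w - 1) := by
            rw [← pow_succ']
            congr 1
            omega
          rw [hkc, h3]
          have h4 : 2*w ≤ w*w := Nat.mul_le_mul_right w hw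
          calc 2 * 2^(Nat.clog 2 w - 1) ≤ 2 * (w-1) := by omega
            _ ≤ 2 * w := by omega
            _ ≤ w * w := h4
            _ = w^2 := (sq w).symm
      have hwk_lt : w / k < w := Nat.div_lt_self (by omega) (by omega)
      have hpow2 : 2^(b*k) ≤ w^(2*b) := by
        calc 2^(b*k) = (2^k)^b := by rw [← pow_mul, Nat.mul_comm]
          _ ≤ (w^2)^b := Nat.pow_le_pow_left h2k b
          _ = w^(2*b) := by rw [← pow_mul]
      rcases blockade b hyp G hw hfree hcf k with hle | ⟨A, B, hAA, _, hAbound, _⟩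
      · have hle' : chi G ≤ 2^(b*k) := by exact_mod_cast (by push_cast; exact hle :
          (chi G : ℝ) ≤ ((2^(b*k) : ℕ) : ℝ))
        calc chi G ≤ 2^(b*k) := hle'
          _ ≤ w^(2*b) := hpow2
          _ ≤ w^(3*b) := Nat.pow_le_pow_right (by omega) (by omega)
          _ ≤ w^(3*b) * fB b (w/k) := Nat.le_mul_of_pos_right _ (one_le_fB b _)
          _ = fB b w := (fB_eq hw).symm
      · have hex : ∃ i, (G.induce (A i)).CliqueFree (w/k + 1) := by
          by_contra hcon
          push_neg at hcon
          choose t ht hcl using fun i => exists_clique_of_not_cliqueFree_induce (hcon i)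
          refine not_cliqueFree_of_blockade G A hAA t ht hcl (hcf.mono ?_)
          have hlt : w < (w/k + 1) * k := (Nat.div_lt_iff_lt_mul hkpos).mp (Nat.lt_succ_self _)
          calc w + 1 ≤ (w/k+1) * k := hlt
            _ = k * (w/k+1) := Nat.mul_comm _ _
        obtain ⟨i, hcfi⟩ := hex
        haveI : Fintype ↥(A i) := Fintype.ofFinite _
        set e : Fin (Fintype.card ↥(A i)) ≃ ↥(A i) := (Fintype.equivFin ↥(A i)).symm with he
        set Hi := (G.induce (A i)).comap ⇑e with hHi
        have hchiAi : chi Hi = chiSet G (A i) := by rw [hHi]; exact chi_comap_induce G (A i) e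
        have embHi : Hi ↪g G := by
          rw [hHi]
          exact (SimpleGraph.Embedding.induce (A i)).comp
            (comapEquivIso e (G.induce (A i))).toEmbedding
        have hfreei : FreeOf Hi (SimpleGraph.pathGraph 5) := freeOf_of_embedding embHi hfree
        have hcfi' : Hi.CliqueFree (w/k + 1) := by
          rw [hHi]
          exact hcfi.comap ⟨(comapEquivIso e (G.induce (A i))).toEmbedding.toCopy⟩
        have hIH : chi Hi ≤ fB b (w/k) := IH (w/k) hwk_lt _ Hi hfreei hcfi'
        have hreal : (chi G : ℝ) ≤ ((w^b * 2^(b*k) * fB b (w/k) : ℕ) : ℝ) := by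
          push_cast
          calc (chi G:ℝ) ≤ (w:ℝ)^b * 2^(b*k) * chiSet G (A i) := hAbound i
            _ ≤ (w:ℝ)^b * 2^(b*k) * fB b (w/k) := by
                apply mul_le_mul_of_nonneg_left ?_ (by positivity)
                rw [← hchiAi]
                exact_mod_cast hIH
        have hnat : chi G ≤ w^b * 2^(b*k) * fB b (w/k) := by exact_mod_cast hreal
        calc chi G ≤ w^b * 2^(b*k) * fB b (w/k) := hnat
          _ ≤ w^b * w^(2*b) * fB b (w/k) :=
              Nat.mul_le_mul_right _ (Nat.mul_le_mul_left _ hpow2)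
          _ = w^(3*b) * fB b (w/k) := by rw [← pow_add]; ring_nf
          _ = fB b w := (fB_eq hw).symm

end Main

/-- Suppose there exists `b ≥ 4` such that every `P₅`-free graph `G` with
clique number `w ≥ 2` and `χ(G) ≥ 2` contains a complete pair `(A, B)` with
`χ(A) ≥ w^{−b}·χ(G)` and `χ(B) ≥ 2^{−b}·χ(G)`. Then there exists `d ≥ 1` such that every
`P₅`-free graph with clique number at most `w ≥ 3` has
`χ(G) ≤ w^{d·log w / log log w}` (binary logarithms). -/
theorem stmt_17 (b : ℕ) (hb : 4 ≤ b)
    (hyp : ∀ (n : ℕ) (G : SimpleGraph (Fin n)) (w : ℕ), 2 ≤ w →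
      ¬ G.CliqueFree w → G.CliqueFree (w + 1) → FreeOf G (pathGraph 5) →
      2 ≤ chi G →
      ∃ A B : Set (Fin n), Disjoint A B ∧ (∀ a ∈ A, ∀ c ∈ B, G.Adj a c) ∧
        (chi G : ℝ) ≤ (w : ℝ) ^ b * chiSet G A ∧
        (chi G : ℝ) ≤ 2 ^ b * chiSet G B) :
    ∃ d : ℕ, 1 ≤ d ∧ ∀ (n : ℕ) (G : SimpleGraph (Fin n)) (w : ℕ), 3 ≤ w →
      FreeOf G (pathGraph 5) → G.CliqueFree (w + 1) →
      (chi G : ℝ) ≤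
        (w : ℝ) ^ ((d : ℝ) * Real.logb 2 w / Real.logb 2 (Real.logb 2 w)) := by
  refine ⟨18 * b, by omega, ?_⟩
  intro n G w hw hfree hcf
  have h1 : chi G ≤ fB b w := main_bound b hyp w n G hfree hcf
  have h2 : fB b w ≤ w ^ (3*b*tD w) := fB_le_pow b w
  have h3 : (chi G : ℝ) ≤ (w:ℝ) ^ ((3*b*tD w : ℕ) : ℝ) := by
    rw [Real.rpow_natCast]
    exact_mod_cast le_trans h1 h2
  refine le_trans h3 (le_trans (final_exponent hw) (le_of_eq ?_))
  norm_num
end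

section
/- Let G be a P5-free graph with clique number w ≥ 2 and suppose S = {u_1,…,u_t} ⊆ V(G) and for each i there exists z_i adjacent to every u_j with j ≠ i and nonadjacent to u_i. Then the stability number of G[S] is at most w; that is, any stable subset {u_i : i ∈ I} of S has |I| ≤ w. -/
open SimpleGraph

lemma p5_embed {V : Type*} (G : SimpleGraph V) (a b c d e : V)
    (hab : G.Adj a b) (hbc : G.Adj b c) (hcd : G.Adj c d) (hde : G.Adj d e)
    (hac : ¬ G.Adj a c) (had : ¬ G.Adj a d) (hae : ¬ G.Adj a e)
    (hbd : ¬ G.Adj b d) (hbe : ¬ G.Adj b e) (hce : ¬ G.Adj c e)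
    (nac : a ≠ c) (nad : a ≠ d) (nae : a ≠ e) (nbd : b ≠ d) (nbe : b ≠ e)
    (nce : c ≠ e) : Nonempty (pathGraph 5 ↪g G) := by
  refine ⟨⟨⟨![a,b,c,d,e], ?_⟩, ?_⟩⟩
  · intro i j h
    fin_cases i <;> fin_cases j <;> simp_all <;>
      first
        | rfl
        | (exact absurd h hab.ne)
        | (exact absurd h.symm hab.ne)
        | (exact absurd h hbc.ne)
        | (exact absurd h.symm hbc.ne)
        | (exact absurd h hcd.ne)
        | (exact absurd h.symm hcd.ne)
        | (exact absurd h hde.ne)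
        | (exact absurd h.symm hde.ne)
        | (exact absurd h nac) | (exact absurd h.symm nac)
        | (exact absurd h nad) | (exact absurd h.symm nad)
        | (exact absurd h nae) | (exact absurd h.symm nae)
        | (exact absurd h nbd) | (exact absurd h.symm nbd)
        | (exact absurd h nbe) | (exact absurd h.symm nbe)
        | (exact absurd h nce) | (exact absurd h.symm nce)
  · intro i j
    fin_cases i <;> fin_cases j <;>
      simp [pathGraph_adj, hab, hbc, hcd, hde, hac, had, hae, hbd, hbe, hce,
        hab.symm, hbc.symm, hcd.symm, hde.symm, G.irrefl, Function.Embedding.coeFn_mk] <;>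
      first
        | decide
        | omega
        | (exact iff_of_true hab (by decide))
        | (exact iff_of_true hab.symm (by decide))
        | (exact iff_of_true hbc (by decide))
        | (exact iff_of_true hbc.symm (by decide))
        | (exact iff_of_true hcd (by decide))
        | (exact iff_of_true hcd.symm (by decide))
        | (exact iff_of_true hde (by decide))
        | (exact iff_of_true hde.symm (by decide))
        | (exact iff_of_false hac (by decide))
        | (exact iff_of_false (hac ∘ G.symm) (by decide))
        | (refine iff_of_false (fun h => ?_) (by decide); exact hac h.symm)
        | (intro h; exact hac h.symm)
        | (exact hac)
        | (exact iff_of_false had (by decide))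
        | (exact iff_of_false (had ∘ G.symm) (by decide))
        | (refine iff_of_false (fun h => ?_) (by decide); exact had h.symm)
        | (intro h; exact had h.symm)
        | (exact had)
        | (exact iff_of_false hae (by decide))
        | (exact iff_of_false (hae ∘ G.symm) (by decide))
        | (refine iff_of_false (fun h => ?_) (by decide); exact hae h.symm)
        | (intro h; exact hae h.symm)
        | (exact hae)
        | (exact iff_of_false hbd (by decide))
        | (exact iff_of_false (hbd ∘ G.symm) (by decide))
        | (refine iff_of_false (fun h => ?_) (by decide); exact hbd h.symm)
        | (intro h; exact hbd h.symm)
        | (exact hbd)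
        | (exact iff_of_false hbe (by decide))
        | (exact iff_of_false (hbe ∘ G.symm) (by decide))
        | (refine iff_of_false (fun h => ?_) (by decide); exact hbe h.symm)
        | (intro h; exact hbe h.symm)
        | (exact hbe)
        | (exact iff_of_false hce (by decide))
        | (exact iff_of_false (hce ∘ G.symm) (by decide))
        | (refine iff_of_false (fun h => ?_) (by decide); exact hce h.symm)
        | (intro h; exact hce h.symm)
        | (exact hce)
        | (exact hab) | (exact hab.symm) | (exact hbc) | (exact hbc.symm)
        | (exact hcd) | (exact hcd.symm) | (exact hde) | (exact hde.symm)
/-- Let `G` be `P₅`-free with clique number `w ≥ 2`, let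
`S = {u₁, …, u_t}` be distinct vertices, and suppose for each `i` there is `z i`
adjacent to every `u j` with `j ≠ i` and nonadjacent to `u i`. Then every stable subset
`{u i : i ∈ I}` of `S` has `|I| ≤ w`. -/
theorem stmt_18 {V : Type*} [Fintype V] (w : ℕ) (hw : 2 ≤ w) (G : SimpleGraph V)
    (hfree : FreeOf G (pathGraph 5)) (hclique : G.CliqueFree (w + 1))
    (t : ℕ) (u : Fin t → V) (hu : Function.Injective u)
    (z : Fin t → V)
    (hz : ∀ i j : Fin t, i ≠ j → G.Adj (z i) (u j))
    (hz' : ∀ i : Fin t, ¬ G.Adj (z i) (u i))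
    (I : Finset (Fin t))
    (hstable : ∀ i ∈ I, ∀ j ∈ I, i ≠ j → ¬ G.Adj (u i) (u j)) :
    I.card ≤ w := by
  classical
  by_contra hcard
  push_neg at hcard
  have h3 : 3 ≤ I.card := by omega
  -- z is adjacent pairwise on I
  have hzadj : ∀ i ∈ I, ∀ j ∈ I, i ≠ j → G.Adj (z i) (z j) := by
    intro i hi j hj hij
    by_contra hnadj
    -- get a third element ℓ
    obtain ⟨l, hl⟩ : (I \ {i, j}).Nonempty := by
      rw [← Finset.card_pos]
      have h2 : (I \ {i, j}).card ≥ I.card - 2 := by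
        have := Finset.le_card_sdiff ({i,j} : Finset (Fin t)) I
        have hc2 : ({i, j} : Finset (Fin t)).card ≤ 2 := Finset.card_insert_le _ _ |>.trans (by simp)
        omega
      omega
    simp only [Finset.mem_sdiff, Finset.mem_insert, Finset.mem_singleton] at hl
    obtain ⟨hlI, hne⟩ := hl
    push_neg at hne
    obtain ⟨hli, hlj⟩ := hne
    -- path u j – z i – u l – z j – u i
    have hab : G.Adj (u j) (z i) := (hz i j hij).symm
    have hbc : G.Adj (z i) (u l) := hz i l (Ne.symm hli)
    have hcd : G.Adj (u l) (z j) := (hz j l (Ne.symm hlj)).symm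
    have hde : G.Adj (z j) (u i) := hz j i (Ne.symm hij)
    have hac : ¬ G.Adj (u j) (u l) := hstable j hj l hlI (fun h => hlj h.symm)
    have had : ¬ G.Adj (u j) (z j) := fun h => hz' j h.symm
    have hae : ¬ G.Adj (u j) (u i) := hstable j hj i hi (Ne.symm hij)
    have hbd : ¬ G.Adj (z i) (z j) := hnadj
    have hbe : ¬ G.Adj (z i) (u i) := hz' i
    have hce : ¬ G.Adj (u l) (u i) := hstable l hlI i hi hli
    have nac : u j ≠ u l := fun h => hlj (hu h).symm
    have nad : u j ≠ z j := fun h => hac (by rw [h]; exact hcd.symm)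
    have nae : u j ≠ u i := fun h => hij ((hu h).symm)
    have nbd : z i ≠ z j := fun h => hbe (by rw [h]; exact hde)
    have nbe : z i ≠ u i := fun h => hae (by rw [← h]; exact hab)
    have nce : u l ≠ u i := fun h => hli (hu h)
    exact hfree.false (p5_embed G (u j) (z i) (u l) (z j) (u i)
      hab hbc hcd hde hac had hae hbd hbe hce nac nad nae nbd nbe nce).some
  -- build a (w+1)-clique
  obtain ⟨J, hJI, hJcard⟩ := Finset.exists_subset_card_eq (show w + 1 ≤ I.card by omega)
  have hzinj : Set.InjOn z J := by
    intro i hi j hj h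
    by_contra hij
    exact hz' j (h ▸ hz i j hij)
  refine hclique (J.image z) ⟨?_, ?_⟩
  · intro x hx y hy hxy
    simp only [Finset.coe_image, Set.mem_image, Finset.mem_coe] at hx hy
    obtain ⟨i, hi, rfl⟩ := hx
    obtain ⟨j, hj, rfl⟩ := hy
    exact hzadj i (hJI hi) j (hJI hj) (fun h => hxy (h ▸ rfl))
  · rw [Finset.card_image_of_injOn hzinj, hJcard]
end
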